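/- arXiv:1605.06373 — 3 statements merged into one kernel-verified Lean document; each statement's English description precedes it below -/
import Mathlib

section
/- (Change of variables relating the two forms of the Caffarelli–Kohn–Nirenberg inequality) Let d ≥ 2, let γ < d and let β be such that β + 2 − γ > 0. Set α := 1 + (β-γ)/2 and n := 2(d-γ)/(β+2-γ). Let w : ℝ^d → ℝ be measurable and define v(x) := w(|x|^{1/α - 1} x) for x ≠ 0. Then: (i) for every q > 0, ∫_{ℝ^d} |w(x)|^q |x|^{-γ} dx = α^{-1} ∫_{ℝ^d} |v(x)|^q |x|^{n-d} dx (as an identity in [0,∞]); and (ii) if moreover w is C¹ on ℝ^d \ {0}, then ∫_{ℝ^d} |∇w(x)|² |x|^{-β} dx = α^{-1} ∫_{ℝ^d} |D_α v(x)|² |x|^{n-d} dx, where D_α v(x) := ∇v(x) + (α-1)((x·∇v(x))/|x|²)x. -/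
open MeasureTheory Real Filter Set
open scoped RealInnerProductSpace

noncomputable section

/-- Euclidean space `ℝ^d`. -/
abbrev Esp (d : ℕ) := EuclideanSpace ℝ (Fin d)

/-- The anisotropic gradient `D_α v(x) = ∇v(x) + (α-1)((x·∇v(x))/|x|²) x`. -/
def Dalpha (d : ℕ) (α : ℝ) (v : Esp d → ℝ) (x : Esp d) : Esp d :=
  gradient v x + ((α - 1) * (⟪x, gradient v x⟫ / ‖x‖^2)) • x

/-- Weighted norm `‖v‖_{q,d-n} = (∫ |v|^q |x|^{n-d} dx)^{1/q}`. -/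
def nnorm (d : ℕ) (q n : ℝ) (v : Esp d → ℝ) : ℝ :=
  (∫ x : Esp d, |v x| ^ q * ‖x‖ ^ (n - (d:ℝ))) ^ (1/q)

/-- Weighted norm `‖D_α v‖_{2,d-n} = (∫ |D_α v|² |x|^{n-d} dx)^{1/2}`. -/
def Dnorm (d : ℕ) (α n : ℝ) (v : Esp d → ℝ) : ℝ :=
  (∫ x : Esp d, ‖Dalpha d α v x‖ ^ (2:ℝ) * ‖x‖ ^ (n - (d:ℝ))) ^ ((1:ℝ)/2)

/-- The interpolation exponent `θ = n(p-1)/(p(n+2-p(n-2)))`. -/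
def thetaN (n p : ℝ) : ℝ := n * (p - 1) / (p * (n + 2 - p * (n - 2)))

/-- The radial function `v⋆(x) = (1+|x|²)^{-1/(p-1)}`. -/
def vstar (d : ℕ) (p : ℝ) : Esp d → ℝ :=
  fun x => (1 + ‖x‖^2) ^ (-(1/(p-1)))

/-- The value of the quotient at `v⋆`. -/
def Kstar (d : ℕ) (α n p : ℝ) : ℝ :=
  nnorm d (2*p) n (vstar d p) /
    (Dnorm d α n (vstar d p) ^ thetaN n p *
      nnorm d (p+1) n (vstar d p) ^ (1 - thetaN n p))

/-- The weight `μ_δ(x) = (1+|x|²)^{-δ}`. -/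
def muW (d : ℕ) (δ : ℝ) (x : Esp d) : ℝ := (1 + ‖x‖^2) ^ (-δ)

/-! ### Auxiliary material for the change of variables -/

/-- The derivative of the map `x ↦ ‖x‖^c • x`. -/
def Lmap (d : ℕ) (c : ℝ) (x : Esp d) : Esp d →L[ℝ] Esp d :=
  (‖x‖ ^ c) • ContinuousLinearMap.id ℝ (Esp d) + (c * ‖x‖ ^ (c - 2)) • ((innerSL ℝ x).smulRight x)

lemma Lmap_apply (d : ℕ) (c : ℝ) (x h : Esp d) :
    Lmap d c x h = ‖x‖ ^ c • h + (c * ‖x‖ ^ (c - 2) * ⟪x, h⟫) • x := by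
  simp [Lmap, ContinuousLinearMap.smul_apply, mul_smul]
  try rw [smul_comm]

lemma norm_rpow_eq' (d : ℕ) (c : ℝ) (x : Esp d) :
    (⟪x, x⟫ : ℝ) ^ (c/2) = ‖x‖ ^ c := by
  rw [real_inner_self_eq_norm_sq, ← Real.rpow_natCast (‖x‖) 2, ← Real.rpow_mul (norm_nonneg x)]
  norm_num
  congr 1
  ring

lemma hasFDerivAt_T (d : ℕ) (c : ℝ) (x : Esp d) (hx : x ≠ 0) :
    HasFDerivAt (fun y : Esp d => ‖y‖ ^ c • y) (Lmap d c x) x := by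
  have hnx : (0:ℝ) < ‖x‖ := norm_pos_iff.2 hx
  have hin : HasFDerivAt (fun y : Esp d => (⟪y, y⟫ : ℝ))
      ((fderivInnerCLM ℝ (x, x)).comp ((ContinuousLinearMap.id ℝ (Esp d)).prod
        (ContinuousLinearMap.id ℝ (Esp d)))) x :=
    (hasFDerivAt_id x).inner ℝ (hasFDerivAt_id x)
  have ht : (⟪x, x⟫ : ℝ) ≠ 0 := by
    rw [real_inner_self_eq_norm_sq]; positivity
  have hr : HasDerivAt (fun r : ℝ => r ^ (c/2)) ((c/2) * (⟪x, x⟫:ℝ) ^ (c/2 - 1)) (⟪x, x⟫ : ℝ) :=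
    Real.hasDerivAt_rpow_const (Or.inl ht)
  have hφ : HasFDerivAt (fun y : Esp d => ((⟪y, y⟫:ℝ)) ^ (c/2))
      (((c/2) * (⟪x, x⟫:ℝ) ^ (c/2 - 1)) • ((fderivInnerCLM ℝ (x, x)).comp
        ((ContinuousLinearMap.id ℝ (Esp d)).prod (ContinuousLinearMap.id ℝ (Esp d))))) x :=
    HasDerivAt.comp_hasFDerivAt (f := fun y : Esp d => (⟪y, y⟫:ℝ)) x hr hin
  have hsmul := hφ.smul (hasFDerivAt_id x)
  simp only [id_eq] at hsmul
  have hfun : (fun y : Esp d => ((⟪y, y⟫:ℝ)) ^ (c/2) • y) = (fun y : Esp d => ‖y‖ ^ c • y) := by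
    funext y
    rw [norm_rpow_eq' d c y]
  rw [show ((fun y : Esp d => ((⟪y, y⟫:ℝ)) ^ (c/2)) • id) = (fun y : Esp d => ‖y‖ ^ c • y) from hfun] at hsmul
  refine hsmul.congr_fderiv (Eq.symm ?_)
  refine ContinuousLinearMap.ext fun h => ?_
  rw [Lmap_apply]
  simp only [ContinuousLinearMap.add_apply, ContinuousLinearMap.smul_apply,
    ContinuousLinearMap.smulRight_apply, ContinuousLinearMap.coe_comp', Function.comp_apply,
    ContinuousLinearMap.prod_apply, ContinuousLinearMap.coe_id', id_eq, fderivInnerCLM_apply]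
  rw [norm_rpow_eq' d c x]
  have hinner : (⟪x, x⟫ : ℝ) ^ (c/2 - 1) = ‖x‖ ^ (c - 2) := by
    rw [real_inner_self_eq_norm_sq, ← Real.rpow_natCast (‖x‖) 2, ← Real.rpow_mul (norm_nonneg x)]
    norm_num
    congr 1
    ring
  rw [hinner, real_inner_comm h x]
  congr 1
  congr 1
  rw [smul_eq_mul]
  ring

lemma Lmap_det (d : ℕ) (c : ℝ) (x : Esp d) (hx : x ≠ 0) :
    (Lmap d c x).det = (1 + c) * ‖x‖ ^ (c * d) := by
  have hnx : (0:ℝ) < ‖x‖ := norm_pos_iff.2 hx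
  set Q : Esp d →L[ℝ] Esp d := (innerSL ℝ x).smulRight x with hQ
  have hfac : Lmap d c x
      = (‖x‖ ^ c) • (ContinuousLinearMap.id ℝ (Esp d) + (c / ‖x‖ ^ (2:ℝ)) • Q) := by
    rw [smul_add, Lmap]
    congr 1
    rw [smul_smul]
    congr 1
    rw [div_eq_mul_inv, ← Real.rpow_neg (norm_nonneg x), mul_comm (‖x‖^c), mul_assoc,
      ← Real.rpow_add hnx]
    ring_nf
  set a : ℝ := c / ‖x‖ ^ (2:ℝ) with ha
  have hdetA : LinearMap.det ((LinearMap.id : Esp d →ₗ[ℝ] Esp d) +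
      a • (Q : Esp d →ₗ[ℝ] Esp d)) = 1 + a * ‖x‖^2 := by
    have hb : ∀ f : Esp d →ₗ[ℝ] Esp d, LinearMap.det f =
        (LinearMap.toMatrix (EuclideanSpace.basisFun (Fin d) ℝ).toBasis
          (EuclideanSpace.basisFun (Fin d) ℝ).toBasis f).det :=
      fun f => (LinearMap.det_toMatrix _ f).symm
    rw [hb]
    have hM : (LinearMap.toMatrix (EuclideanSpace.basisFun (Fin d) ℝ).toBasis
          (EuclideanSpace.basisFun (Fin d) ℝ).toBasis
          ((LinearMap.id : Esp d →ₗ[ℝ] Esp d) + a • (Q : Esp d →ₗ[ℝ] Esp d))) =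
        1 + Matrix.replicateCol Unit (a • (x : Fin d → ℝ)) * Matrix.replicateRow Unit (x : Fin d → ℝ) := by
      ext i j
      rw [LinearMap.toMatrix_apply]
      simp [hQ, Matrix.one_apply, EuclideanSpace.basisFun_apply, Matrix.mul_apply,
        real_inner_comm, EuclideanSpace.inner_single_right]
      exact Or.inl (mul_comm _ _)
    rw [hM, Matrix.det_one_add_replicateCol_mul_replicateRow]
    have hxx : ‖x‖^2 = ∑ i, x i * x i := by
      rw [EuclideanSpace.norm_sq_eq]; simp [sq]
    rw [hxx]
    simp [dotProduct, Finset.mul_sum]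
    exact Finset.sum_congr rfl fun i _ => by ring
  have hcoe : ((Lmap d c x : Esp d →L[ℝ] Esp d) : Esp d →ₗ[ℝ] Esp d) =
      (‖x‖ ^ c) • ((LinearMap.id : Esp d →ₗ[ℝ] Esp d) + a • (Q : Esp d →ₗ[ℝ] Esp d)) := by
    rw [hfac]; rfl
  rw [ContinuousLinearMap.det, hcoe, LinearMap.det_smul, finrank_euclideanSpace_fin, hdetA]
  have h2 : a * ‖x‖^2 = c := by
    rw [ha, ← Real.rpow_natCast (‖x‖) 2]
    field_simp
    norm_num
  rw [h2, ← Real.rpow_natCast (‖x‖ ^ c) d, ← Real.rpow_mul (norm_nonneg x)]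
  ring

lemma gradient_comp (d : ℕ) (c : ℝ) (w : Esp d → ℝ) (hw' : ContDiffOn ℝ 1 w {(0:Esp d)}ᶜ)
    (x : Esp d) (hx : x ≠ 0) :
    gradient (fun y => w (‖y‖ ^ c • y)) x = Lmap d c x (gradient w (‖x‖ ^ c • x)) := by
  have hnx : (0:ℝ) < ‖x‖ := norm_pos_iff.2 hx
  have hTx : (‖x‖ ^ c • x : Esp d) ≠ 0 := by
    simp only [ne_eq, smul_eq_zero, not_or]
    exact ⟨ne_of_gt (Real.rpow_pos_of_pos hnx c), hx⟩
  have hdw : DifferentiableAt ℝ w (‖x‖ ^ c • x) :=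
    (hw'.contDiffAt (isOpen_compl_singleton.mem_nhds hTx)).differentiableAt one_ne_zero
  set g := gradient w (‖x‖ ^ c • x) with hg
  have hfd : (InnerProductSpace.toDual ℝ (Esp d)) g = fderiv ℝ w (‖x‖ ^ c • x) :=
    (InnerProductSpace.toDual ℝ (Esp d)).apply_symm_apply _
  have hcomp : HasFDerivAt (w ∘ fun y : Esp d => ‖y‖ ^ c • y)
      ((fderiv ℝ w (‖x‖ ^ c • x)).comp (Lmap d c x)) x :=
    HasFDerivAt.comp (f := fun y : Esp d => ‖y‖ ^ c • y) x hdw.hasFDerivAt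
      (hasFDerivAt_T d c x hx)
  have hCLM : (fderiv ℝ w (‖x‖ ^ c • x)).comp (Lmap d c x) =
      (InnerProductSpace.toDual ℝ (Esp d)) (Lmap d c x g) := by
    refine ContinuousLinearMap.ext fun h => ?_
    rw [← hfd]
    simp only [ContinuousLinearMap.coe_comp', Function.comp_apply,
      InnerProductSpace.toDual_apply_apply]
    rw [Lmap_apply, Lmap_apply, inner_add_left, inner_add_right,
      real_inner_smul_left, real_inner_smul_right,
      real_inner_smul_left, real_inner_smul_right, real_inner_comm g x]
    ring
  rw [hCLM] at hcomp
  have := hcomp.hasGradientAt.gradient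
  simpa [Function.comp_def] using this

lemma Dalpha_eq (d : ℕ) (α : ℝ) (hα : 0 < α) (w v : Esp d → ℝ)
    (hv : ∀ x : Esp d, v x = w (‖x‖ ^ (1/α - 1) • x))
    (hw' : ContDiffOn ℝ 1 w {(0:Esp d)}ᶜ) (x : Esp d) (hx : x ≠ 0) :
    Dalpha d α v x = ‖x‖ ^ (1/α - 1) • gradient w (‖x‖ ^ (1/α - 1) • x) := by
  have hnx : (0:ℝ) < ‖x‖ := norm_pos_iff.2 hx
  set c : ℝ := 1/α - 1 with hc
  have hvfun : v = fun y => w (‖y‖ ^ c • y) := funext hv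
  have hgrad : gradient v x = Lmap d c x (gradient w (‖x‖ ^ c • x)) := by
    rw [hvfun]; exact gradient_comp d c w hw' x hx
  set g := gradient w (‖x‖ ^ c • x) with hg
  set t : ℝ := ⟪x, g⟫ with htdef
  have key : ‖x‖ ^ (c-2) * ‖x‖ ^ (2:ℕ) = ‖x‖ ^ c := by
    rw [← Real.rpow_natCast ‖x‖ 2, ← Real.rpow_add hnx]
    norm_num
  have hip : (⟪x, gradient v x⟫ : ℝ) = (1 + c) * ‖x‖ ^ c * t := by
    rw [hgrad, Lmap_apply, inner_add_right, real_inner_smul_right, real_inner_smul_right,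
      real_inner_self_eq_norm_sq, ← htdef]
    linear_combination (c * t) * key
  rw [Dalpha, hip, hgrad, Lmap_apply, ← htdef, add_assoc, ← add_smul]
  have hcoef : c * ‖x‖ ^ (c - 2) * t + (α - 1) * ((1 + c) * ‖x‖ ^ c * t / ‖x‖ ^ 2) = 0 := by
    have key2 : ‖x‖ ^ (c-2) = ‖x‖ ^ c / ‖x‖ ^ (2:ℕ) := by
      field_simp [← key]
      exact key
    rw [key2, hc]
    have hα' : α ≠ 0 := ne_of_gt hα
    field_simp
    ring
  rw [hcoef, zero_smul, add_zero]

/-- Change of variables `v(x) = w(|x|^{1/α-1} x)` relating the two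
forms of the Caffarelli–Kohn–Nirenberg inequality: (i) weighted Lebesgue
integrals transform with factor `α⁻¹`; (ii) likewise for gradient integrals,
with `∇w` replaced by `D_α v`. -/
theorem CKN_change_of_variables
    (d : ℕ) (hd : 2 ≤ d) (β γ α n : ℝ)
    (hγd : γ < (d:ℝ)) (hβγ : 0 < β + 2 - γ)
    (hα : α = 1 + (β - γ)/2) (hn : n = 2*((d:ℝ) - γ)/(β + 2 - γ))
    (w : Esp d → ℝ) (hw : Measurable w)
    (v : Esp d → ℝ) (hv : ∀ x : Esp d, v x = w (‖x‖ ^ (1/α - 1) • x)) :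
    (∀ q : ℝ, 0 < q →
      ∫⁻ x : Esp d, ENNReal.ofReal (|w x| ^ q * ‖x‖ ^ (-γ)) =
        ENNReal.ofReal α⁻¹ *
          ∫⁻ x : Esp d, ENNReal.ofReal (|v x| ^ q * ‖x‖ ^ (n - (d:ℝ))))
    ∧
    (ContDiffOn ℝ 1 w {(0 : Esp d)}ᶜ →
      ∫⁻ x : Esp d, ENNReal.ofReal (‖gradient w x‖ ^ 2 * ‖x‖ ^ (-β)) =
        ENNReal.ofReal α⁻¹ *
          ∫⁻ x : Esp d, ENNReal.ofReal (‖Dalpha d α v x‖ ^ 2 * ‖x‖ ^ (n - (d:ℝ)))) := by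
  haveI : Nonempty (Fin d) := ⟨⟨0, by omega⟩⟩
  have hαpos : 0 < α := by rw [hα]; linarith
  have hα' : α ≠ 0 := ne_of_gt hαpos
  set c : ℝ := 1/α - 1 with hc
  have hnα : n * α = (d:ℝ) - γ := by
    rw [hn, hα]
    field_simp
    ring
  have h2α : 2 * α = β + 2 - γ := by rw [hα]; ring
  have h0 : (volume : Measure (Esp d)) {(0:Esp d)} = 0 := by
    haveI : Nontrivial (Esp d) := by
      refine ⟨⟨EuclideanSpace.single ⟨0, by omega⟩ 1, 0, ?_⟩⟩
      intro h
      have := congrArg (fun v : Esp d => v ⟨0, by omega⟩) h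
      simp [EuclideanSpace.single] at this
    exact measure_singleton 0
  have hs : MeasurableSet ({(0:Esp d)}ᶜ) := (measurableSet_singleton 0).compl
  have hnull : ∀ f : Esp d → ENNReal, ∫⁻ x, f x = ∫⁻ x in {(0:Esp d)}ᶜ, f x := fun f => by
    rw [← setLIntegral_univ]
    exact (setLIntegral_congr (by rw [ae_eq_univ, compl_compl]; exact h0)).symm
  have hTnorm : ∀ x : Esp d, x ≠ 0 → ‖(‖x‖ ^ c • x : Esp d)‖ = ‖x‖ ^ (1/α) := by
    intro x hx
    have hnx : (0:ℝ) < ‖x‖ := norm_pos_iff.2 hx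
    rw [norm_smul, Real.norm_eq_abs, abs_of_pos (Real.rpow_pos_of_pos hnx c),
      ← Real.rpow_add_one (ne_of_gt hnx)]
    congr 1
    rw [hc]; ring
  have hInj : InjOn (fun x : Esp d => ‖x‖ ^ c • x) {(0:Esp d)}ᶜ := by
    intro x hx y hy hxy
    simp only [mem_compl_iff, mem_singleton_iff] at hx hy
    simp only at hxy
    have h1 : ‖x‖ ^ ((1:ℝ)/α) = ‖y‖ ^ ((1:ℝ)/α) := by
      rw [← hTnorm x hx, ← hTnorm y hy, hxy]
    have h2 : ‖x‖ = ‖y‖ :=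
      Real.rpow_left_injOn (one_div_ne_zero hα') (norm_nonneg x) (norm_nonneg y) h1
    rw [← h2] at hxy
    exact smul_right_injective (Esp d) (ne_of_gt (Real.rpow_pos_of_pos (norm_pos_iff.2 hx) c)) hxy
  have hIm : (fun x : Esp d => ‖x‖ ^ c • x) '' {(0:Esp d)}ᶜ = {(0:Esp d)}ᶜ := by
    apply Subset.antisymm
    · rintro _ ⟨x, hx, rfl⟩
      simp only [mem_compl_iff, mem_singleton_iff] at hx ⊢
      intro h0'
      have := congrArg norm h0'
      rw [hTnorm x hx, norm_zero] at this
      exact absurd this (ne_of_gt (Real.rpow_pos_of_pos (norm_pos_iff.2 hx) _))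
    · intro y hy
      simp only [mem_compl_iff, mem_singleton_iff] at hy
      have hny : (0:ℝ) < ‖y‖ := norm_pos_iff.2 hy
      have hx0 : (‖y‖ ^ (α - 1) • y : Esp d) ≠ 0 := by
        simp only [ne_eq, smul_eq_zero, not_or]
        exact ⟨ne_of_gt (Real.rpow_pos_of_pos hny _), hy⟩
      refine ⟨‖y‖ ^ (α - 1) • y, by simpa using hx0, ?_⟩
      simp only
      have hxn : ‖(‖y‖ ^ (α-1) • y : Esp d)‖ = ‖y‖ ^ α := by
        rw [norm_smul, Real.norm_eq_abs, abs_of_pos (Real.rpow_pos_of_pos hny _),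
          ← Real.rpow_add_one (ne_of_gt hny)]
        congr 1
        ring
      rw [hxn, smul_smul]
      have hcomb : (‖y‖ ^ α) ^ c * ‖y‖ ^ (α - 1) = 1 := by
        rw [← Real.rpow_mul (norm_nonneg y), ← Real.rpow_add hny]
        have h00 : α * c + (α - 1) = 0 := by rw [hc]; field_simp; ring
        rw [h00, Real.rpow_zero]
      rw [hcomb, one_smul]
  -- the master change-of-variables formula
  have hCoV : ∀ g : Esp d → ENNReal, ∫⁻ y, g y =
      ∫⁻ x in {(0:Esp d)}ᶜ, ENNReal.ofReal (α⁻¹ * ‖x‖ ^ (c * d)) * g (‖x‖ ^ c • x) := by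
    intro g
    rw [hnull g]
    have him2 : ∫⁻ y in {(0:Esp d)}ᶜ, g y
        = ∫⁻ y in (fun x : Esp d => ‖x‖ ^ c • x) '' {(0:Esp d)}ᶜ, g y := by rw [hIm]
    rw [him2, lintegral_image_eq_lintegral_abs_det_fderiv_mul volume hs
        (fun x hx => (hasFDerivAt_T d c x (by simpa using hx)).hasFDerivWithinAt) hInj g]
    refine setLIntegral_congr_fun hs (fun x hx => ?_)
    have hx : x ≠ 0 := by simpa using hx
    have hnx : (0:ℝ) < ‖x‖ := norm_pos_iff.2 hx
    rw [Lmap_det d c x hx]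
    have h1c : 1 + c = α⁻¹ := by rw [hc]; field_simp; ring
    rw [h1c, abs_of_pos (by positivity)]
  have h1α : (1:ℝ)/α * α = 1 := by field_simp
  constructor
  · -- part (i)
    intro q hq
    rw [hCoV (fun y => ENNReal.ofReal (|w y| ^ q * ‖y‖ ^ (-γ)))]
    have hexp1 : c * d + (1/α) * (-γ) = n - (d:ℝ) := by
      apply mul_left_cancel₀ hα'
      have hαc : α * c = 1 - α := by rw [hc]; field_simp
      calc α * (c * d + (1/α) * (-γ)) = (α * c) * d + (1/α * α) * (-γ) := by ring
        _ = (1 - α) * d + (-γ) := by rw [hαc, h1α]; ring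
        _ = α * (n - d) := by nlinarith [hnα]
    have hpt : ∀ x ∈ ({(0:Esp d)}ᶜ : Set (Esp d)),
        ENNReal.ofReal (α⁻¹ * ‖x‖ ^ (c * d)) *
          ENNReal.ofReal (|w (‖x‖ ^ c • x)| ^ q * ‖(‖x‖ ^ c • x : Esp d)‖ ^ (-γ)) =
        ENNReal.ofReal α⁻¹ * ENNReal.ofReal (|v x| ^ q * ‖x‖ ^ (n - (d:ℝ))) := by
      intro x hx
      have hx : x ≠ 0 := by simpa using hx
      have hnx : (0:ℝ) < ‖x‖ := norm_pos_iff.2 hx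
      rw [← hv x, hTnorm x hx,
        ← ENNReal.ofReal_mul (by positivity), ← ENNReal.ofReal_mul (by positivity)]
      congr 1
      rw [← Real.rpow_mul (norm_nonneg x) (1/α) (-γ)]
      have hcomb : ‖x‖ ^ (c * d) * ‖x‖ ^ ((1/α) * (-γ)) = ‖x‖ ^ (n - (d:ℝ)) := by
        rw [← Real.rpow_add hnx, hexp1]
      calc α⁻¹ * ‖x‖ ^ (c * (d:ℝ)) * (|v x| ^ q * ‖x‖ ^ ((1/α) * (-γ)))
          = α⁻¹ * (|v x| ^ q * (‖x‖ ^ (c * (d:ℝ)) * ‖x‖ ^ ((1/α) * (-γ)))) := by ring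
        _ = α⁻¹ * (|v x| ^ q * ‖x‖ ^ (n - (d:ℝ))) := by rw [hcomb]
    rw [setLIntegral_congr_fun hs hpt,
      lintegral_const_mul' _ _ ENNReal.ofReal_ne_top, ← hnull]
  · -- part (ii)
    intro hw'
    rw [hCoV (fun y => ENNReal.ofReal (‖gradient w y‖ ^ 2 * ‖y‖ ^ (-β)))]
    have hexp2 : c * d + (1/α) * (-β) = c * 2 + (n - (d:ℝ)) := by
      apply mul_left_cancel₀ hα'
      have hαc : α * c = 1 - α := by rw [hc]; field_simp
      calc α * (c * d + (1/α) * (-β)) = (α * c) * d + (1/α * α) * (-β) := by ring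
        _ = (1 - α) * d + (-β) := by rw [hαc, h1α]; ring
        _ = (α * c) * 2 + (n * α - α * d) := by rw [hαc]; nlinarith [hnα, h2α]
        _ = α * (c * 2 + (n - d)) := by ring
    have hpt : ∀ x ∈ ({(0:Esp d)}ᶜ : Set (Esp d)),
        ENNReal.ofReal (α⁻¹ * ‖x‖ ^ (c * d)) *
          ENNReal.ofReal (‖gradient w (‖x‖ ^ c • x)‖ ^ 2 * ‖(‖x‖ ^ c • x : Esp d)‖ ^ (-β)) =
        ENNReal.ofReal α⁻¹ * ENNReal.ofReal (‖Dalpha d α v x‖ ^ 2 * ‖x‖ ^ (n - (d:ℝ))) := by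
      intro x hx
      have hx : x ≠ 0 := by simpa using hx
      have hnx : (0:ℝ) < ‖x‖ := norm_pos_iff.2 hx
      have hDa : Dalpha d α v x = ‖x‖ ^ c • gradient w (‖x‖ ^ c • x) :=
        Dalpha_eq d α hαpos w v hv hw' x hx
      have hDn : ‖Dalpha d α v x‖ = ‖x‖ ^ c * ‖gradient w (‖x‖ ^ c • x)‖ := by
        rw [hDa, norm_smul, Real.norm_eq_abs, abs_of_pos (Real.rpow_pos_of_pos hnx c)]
      rw [hTnorm x hx, hDn,
        ← ENNReal.ofReal_mul (by positivity), ← ENNReal.ofReal_mul (by positivity)]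
      congr 1
      rw [← Real.rpow_mul (norm_nonneg x) (1/α) (-β)]
      have hsq : (‖x‖ ^ c) ^ (2:ℕ) = ‖x‖ ^ (c * 2) := by
        rw [← Real.rpow_natCast (‖x‖ ^ c) 2, ← Real.rpow_mul (norm_nonneg x)]
        norm_num
      have hcomb : ‖x‖ ^ (c * d) * ‖x‖ ^ ((1/α) * (-β)) = ‖x‖ ^ (c * 2) * ‖x‖ ^ (n - (d:ℝ)) := by
        rw [← Real.rpow_add hnx, ← Real.rpow_add hnx, hexp2]
      calc α⁻¹ * ‖x‖ ^ (c * (d:ℝ)) * (‖gradient w (‖x‖ ^ c • x)‖ ^ 2 * ‖x‖ ^ ((1/α) * (-β)))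
          = α⁻¹ * (‖gradient w (‖x‖ ^ c • x)‖ ^ 2 *
              (‖x‖ ^ (c * (d:ℝ)) * ‖x‖ ^ ((1/α) * (-β)))) := by ring
        _ = α⁻¹ * (‖gradient w (‖x‖ ^ c • x)‖ ^ 2 * (‖x‖ ^ (c * 2) * ‖x‖ ^ (n - (d:ℝ)))) := by
              rw [hcomb]
        _ = α⁻¹ * ((‖x‖ ^ c * ‖gradient w (‖x‖ ^ c • x)‖) ^ 2 * ‖x‖ ^ (n - (d:ℝ))) := by
              rw [mul_pow, hsq]; ring
    rw [setLIntegral_congr_fun hs hpt,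
      lintegral_const_mul' _ _ ENNReal.ofReal_ne_top, ← hnull]
end
end

section
/- (Circle inequality with quartic remainder) Let ν > 2 be a real number and let P : ℝ → (0,∞) be a C³ function which is 2π-periodic. Then ∫₀^{2π} |P''(θ)|² P(θ)^{1-ν} dθ ≥ ∫₀^{2π} |P'(θ)|² P(θ)^{1-ν} dθ + ((ν-1)(ν+3)/12) ∫₀^{2π} (|P'(θ)|⁴ / P(θ)²) P(θ)^{1-ν} dθ. -/
open Real intervalIntegral

noncomputable section

section CircleIneqAux
open MeasureTheory Set Filter Topology

lemma key_id (s c d v : ℝ) (hs : s ≠ 0) (hsq : s^2 + c^2 = 1) :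
    d^2 - v^2 = (d - v*(c/s))^2 + (2*v*d*(c/s) - v^2/s^2) := by
  field_simp
  linear_combination (-v^2) * hsq

lemma poincare0 (g g' : ℝ → ℝ) (hg : ∀ x, HasDerivAt g (g' x) x) (hg' : Continuous g')
    (h0 : g 0 = 0) (hπ : g π = 0) :
    ∫ x in (0:ℝ)..π, (g x)^2 ≤ ∫ x in (0:ℝ)..π, (g' x)^2 := by
  have hgc : Continuous g := continuous_iff_continuousAt.mpr fun x => (hg x).continuousAt
  obtain ⟨M, hM⟩ : ∃ M : ℝ, ∀ x ∈ Icc (0:ℝ) π, |g' x| ≤ M := by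
    obtain ⟨M, hM⟩ := (isCompact_Icc (a := (0:ℝ)) (b := π)).exists_bound_of_continuousOn
      hg'.continuousOn
    exact ⟨M, fun x hx => by simpa using hM x hx⟩
  have hM0 : 0 ≤ M := le_trans (abs_nonneg _) (hM 0 ⟨le_rfl, pi_pos.le⟩)
  have hlip : ∀ x ∈ Icc (0:ℝ) π, ∀ y ∈ Icc (0:ℝ) π, |g x - g y| ≤ M * |x - y| := by
    intro x hx y hy
    have := Convex.norm_image_sub_le_of_norm_hasDerivWithin_le
      (f := g) (f' := g') (s := Icc 0 π) (fun z _ => (hg z).hasDerivWithinAt)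
      (fun z hz => by simpa using hM z hz) (convex_Icc 0 π) hy hx
    simpa [Real.norm_eq_abs] using this
  have hhc : Continuous (fun x => (g' x)^2 - (g x)^2) := (hg'.pow 2).sub (hgc.pow 2)
  set φ : ℝ → ℝ := fun x => (g x)^2 * (Real.cos x / Real.sin x) with hφ
  suffices h0I : 0 ≤ ∫ x in (0:ℝ)..π, ((g' x)^2 - (g x)^2) by
    rw [intervalIntegral.integral_sub ((hg'.fun_pow 2).intervalIntegrable 0 π)
      ((hgc.fun_pow 2).intervalIntegrable 0 π)] at h0I
    linarith
  -- Step 1: key inequality for each ε ∈ (0, π/2)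
  have step1 : ∀ ε ∈ Ioo (0:ℝ) (π/2),
      φ (π - ε) - φ ε ≤ ∫ x in ε..(π-ε), ((g' x)^2 - (g x)^2) := by
    intro ε ⟨hε0, hε2⟩
    have hεπ : ε ≤ π - ε := by linarith
    have hsin : ∀ x ∈ uIcc ε (π - ε), Real.sin x ≠ 0 := by
      intro x hx
      rw [uIcc_of_le hεπ] at hx
      exact (Real.sin_pos_of_pos_of_lt_pi (lt_of_lt_of_le hε0 hx.1)
        (lt_of_le_of_lt hx.2 (by linarith [pi_pos]))).ne'
    set φ' : ℝ → ℝ := fun x => 2 * g x * g' x * (Real.cos x / Real.sin x)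
        - (g x)^2 / (Real.sin x)^2 with hφ'
    have hdφ : ∀ x ∈ uIcc ε (π - ε), HasDerivAt φ (φ' x) x := by
      intro x hx
      have hs := hsin x hx
      have h1 : HasDerivAt (fun x => (g x)^2) (2 * g x * g' x) x := by
        simpa [mul_comm, mul_assoc, mul_left_comm] using (hg x).fun_pow 2
      have h2 : HasDerivAt (fun x => Real.cos x / Real.sin x)
          (-1 / (Real.sin x)^2) x := by
        have hd := (Real.hasDerivAt_cos x).div (Real.hasDerivAt_sin x) hs
        refine HasDerivAt.congr_deriv hd ?_
        symm
        have hsq := Real.sin_sq_add_cos_sq x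
        field_simp
        linarith
      have := h1.mul h2
      refine HasDerivAt.congr_deriv this ?_
      symm
      simp only [hφ']
      field_simp
      ring
    have hcφ' : ContinuousOn φ' (uIcc ε (π - ε)) := by
      apply ContinuousOn.sub
      · exact (((continuous_const.mul hgc).mul hg').continuousOn).mul
          (Real.continuous_cos.continuousOn.div Real.continuous_sin.continuousOn hsin)
      · exact ((hgc.pow 2).continuousOn).div ((Real.continuous_sin.pow 2).continuousOn)
          (fun x hx => pow_ne_zero 2 (hsin x hx))
    have hFTC : ∫ x in ε..(π-ε), φ' x = φ (π - ε) - φ ε :=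
      intervalIntegral.integral_eq_sub_of_hasDerivAt hdφ (hcφ'.intervalIntegrable)
    have hpt : ∀ x ∈ uIcc ε (π - ε),
        (g' x)^2 - (g x)^2 = (g' x - g x * (Real.cos x / Real.sin x))^2 + φ' x := by
      intro x hx
      exact key_id (Real.sin x) (Real.cos x) (g' x) (g x) (hsin x hx)
        (Real.sin_sq_add_cos_sq x)
    have heq : ∫ x in ε..(π-ε), ((g' x)^2 - (g x)^2)
        = (∫ x in ε..(π-ε), (g' x - g x * (Real.cos x / Real.sin x))^2)
          + (φ (π-ε) - φ ε) := by
      rw [← hFTC, ← intervalIntegral.integral_add _ hcφ'.intervalIntegrable]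
      · exact intervalIntegral.integral_congr fun x hx => hpt x hx
      · apply ContinuousOn.intervalIntegrable
        apply ContinuousOn.pow
        exact hg'.continuousOn.sub (hgc.continuousOn.mul
          (Real.continuous_cos.continuousOn.div Real.continuous_sin.continuousOn hsin))
    rw [heq]
    have hnn : 0 ≤ ∫ x in ε..(π-ε), (g' x - g x * (Real.cos x / Real.sin x))^2 := by
      apply intervalIntegral.integral_nonneg hεπ
      intro x _; positivity
    linarith
  -- Step 2: tendsto of the truncated integral
  have hprim : Continuous (fun t => ∫ x in (0:ℝ)..t, ((g' x)^2 - (g x)^2)) :=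
    intervalIntegral.continuous_primitive (fun a b => hhc.intervalIntegrable a b) 0
  have hsplit : ∀ ε : ℝ, ∫ x in ε..(π-ε), ((g' x)^2 - (g x)^2)
      = (∫ x in (0:ℝ)..(π-ε), ((g' x)^2 - (g x)^2))
        - ∫ x in (0:ℝ)..ε, ((g' x)^2 - (g x)^2) := by
    intro ε
    rw [intervalIntegral.integral_interval_sub_left (hhc.intervalIntegrable 0 (π-ε))
      (hhc.intervalIntegrable 0 ε)]
  have step2 : Tendsto (fun ε => ∫ x in ε..(π-ε), ((g' x)^2 - (g x)^2)) (𝓝[>] 0)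
      (𝓝 (∫ x in (0:ℝ)..π, ((g' x)^2 - (g x)^2))) := by
    have h1 : Tendsto (fun ε : ℝ => π - ε) (𝓝 0) (𝓝 π) := by
      simpa using tendsto_const_nhds.sub (tendsto_id : Tendsto id (𝓝 (0:ℝ)) _)
    have h2 := (hprim.tendsto π).comp h1
    have h3 := hprim.tendsto 0
    simp only [intervalIntegral.integral_same] at h3
    have h4 := h2.sub h3
    simp only [sub_zero] at h4
    have h5 := h4.mono_left (nhdsWithin_le_nhds (s := Set.Ioi (0:ℝ)))
    refine Tendsto.congr (fun ε => (hsplit ε).symm) h5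
  -- Step 3: the boundary terms tend to 0
  have step3 : Tendsto (fun ε => φ (π - ε) - φ ε) (𝓝[>] 0) (𝓝 0) := by
    apply squeeze_zero_norm' (a := fun ε => 2 * (π * M^2 * ε))
    · filter_upwards [Ioo_mem_nhdsGT_of_mem
        (⟨le_rfl, by positivity⟩ : (0:ℝ) ∈ Ico 0 (π/2))] with ε hε
      obtain ⟨hε0, hε2⟩ := hε
      have hsinε : 2/π * ε ≤ Real.sin ε := Real.mul_le_sin hε0.le hε2.le
      have hsinpos : 0 < Real.sin ε := lt_of_lt_of_le (by positivity) hsinε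
      have hgε : |g ε| ≤ M * ε := by
        have := hlip ε ⟨hε0.le, by linarith [pi_pos]⟩ 0 ⟨le_rfl, pi_pos.le⟩
        simpa [h0, abs_of_pos hε0] using this
      have hgπε : |g (π - ε)| ≤ M * ε := by
        have hl := hlip (π - ε) ⟨by linarith, by linarith⟩ π ⟨pi_pos.le, le_rfl⟩
        rw [hπ, sub_zero] at hl
        have h2 : |π - ε - π| = ε := by rw [abs_of_nonpos (by linarith)]; ring
        rwa [h2] at hl
      have hinv : 1 / Real.sin ε ≤ π / (2*ε) := by
        have e1 : 1 / Real.sin ε ≤ 1 / (2/π * ε) :=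
          one_div_le_one_div_of_le (by positivity) hsinε
        have e2 : 1 / (2/π * ε) = π / (2*ε) := by
          rw [eq_div_iff (by positivity)]
          field_simp
        linarith
      have hφabs : ∀ y, Real.sin y = Real.sin ε → |g y| ≤ M*ε → |φ y| ≤ π * M^2 * ε := by
        intro y hs hgy
        have e0 : |φ y| = (g y)^2 * (|Real.cos y| / Real.sin ε) := by
          rw [hφ]
          simp only []
          rw [abs_mul, abs_pow, sq_abs, abs_div, hs, abs_of_pos hsinpos]
        rw [e0]
        have h1 : (g y)^2 ≤ M^2*ε^2 := by
          nlinarith [abs_nonneg (g y), sq_abs (g y)]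
        have h2 : |Real.cos y| / Real.sin ε ≤ π / (2*ε) := by
          refine le_trans ((div_le_div_iff_of_pos_right hsinpos).mpr (Real.abs_cos_le_one y)) hinv
        have h3 : (g y)^2 * (|Real.cos y| / Real.sin ε) ≤ M^2*ε^2 * (π/(2*ε)) :=
          mul_le_mul h1 h2 (by positivity) (by positivity)
        have h4 : M^2*ε^2 * (π/(2*ε)) = π*M^2*ε/2 := by
          field_simp
        nlinarith [sq_nonneg M, hε0.le, pi_pos.le]
      have b1 := hφabs ε rfl hgε
      have b2 := hφabs (π - ε) (Real.sin_pi_sub ε) hgπε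
      calc ‖φ (π - ε) - φ ε‖ = |φ (π - ε) - φ ε| := rfl
        _ ≤ |φ (π - ε)| + |φ ε| := abs_sub _ _
        _ ≤ 2 * (π * M^2 * ε) := by linarith
    · have ht : Tendsto (fun ε : ℝ => 2 * (π * M^2 * ε)) (𝓝 0) (𝓝 0) := by
        have hc : Continuous (fun ε : ℝ => 2 * (π * M^2 * ε)) := by continuity
        have := hc.tendsto 0
        simpa using this
      exact ht.mono_left (nhdsWithin_le_nhds (s := Set.Ioi (0:ℝ)))
  have hev : (fun ε => φ (π - ε) - φ ε) ≤ᶠ[𝓝[>] (0:ℝ)]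
      fun ε => ∫ x in ε..(π-ε), ((g' x)^2 - (g x)^2) := by
    filter_upwards [Ioo_mem_nhdsGT_of_mem
      (⟨le_rfl, by positivity⟩ : (0:ℝ) ∈ Ico 0 (π/2))] with ε hε
    exact step1 ε hε
  exact le_of_tendsto_of_tendsto step3 step2 hev

lemma poincare (g g' : ℝ → ℝ) (hg : ∀ x, HasDerivAt g (g' x) x) (hg' : Continuous g')
    (a : ℝ) (h0 : g a = 0) (hπ : g (a + π) = 0) :
    ∫ x in a..(a+π), (g x)^2 ≤ ∫ x in a..(a+π), (g' x)^2 := by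
  have hd : ∀ x : ℝ, HasDerivAt (fun y => g (y + a)) (g' (x + a)) x := by
    intro x
    simpa [Function.comp_def] using (hg (x + a)).comp x ((hasDerivAt_id x).add_const a)
  have := poincare0 (fun y => g (y + a)) (fun y => g' (y + a)) hd
    (hg'.comp (continuous_id.add continuous_const))
    (by simpa using h0) (by show g (π + a) = 0; rw [add_comm]; exact hπ)
  rw [intervalIntegral.integral_comp_add_right (fun x => (g x)^2),
    intervalIntegral.integral_comp_add_right (fun x => (g' x)^2)] at this
  simpa [add_comm] using this

lemma exists_zero_of_integral (q : ℝ → ℝ) (hq : Continuous q)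
    (hint : ∫ x in (0:ℝ)..π, q x = 0) : ∃ c ∈ Set.Icc (0:ℝ) π, q c = 0 := by
  by_contra hc
  push_neg at hc
  have hIVT : ∀ x₁ ∈ Set.Icc (0:ℝ) π, ∀ x₂ ∈ Set.Icc (0:ℝ) π, q x₁ < 0 → 0 < q x₂ → False := by
    intro x₁ h₁ x₂ h₂ hq₁ hq₂
    have h0m : (0:ℝ) ∈ Set.uIcc (q x₁) (q x₂) := by
      rw [Set.mem_uIcc]; left; exact ⟨hq₁.le, hq₂.le⟩
    obtain ⟨c, hc', hqc⟩ := intermediate_value_uIcc (f := q) hq.continuousOn h0m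
    have : c ∈ Set.Icc (0:ℝ) π := by
      have := Set.uIcc_subset_uIcc (Set.mem_uIcc.mpr (Or.inl h₁))
        (Set.mem_uIcc.mpr (Or.inl h₂))
      have h2 := this hc'
      rw [Set.uIcc_of_le pi_pos.le] at h2
      exact h2
    exact hc c this hqc
  rcases lt_or_gt_of_ne (hc 0 ⟨le_rfl, pi_pos.le⟩) with hneg | hpos
  · have hall : ∀ x ∈ Set.Ioo (0:ℝ) π, q x < 0 := by
      intro x hx
      rcases lt_or_gt_of_ne (hc x ⟨hx.1.le, hx.2.le⟩) with h | h
      · exact h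
      · exact absurd (hIVT 0 ⟨le_rfl, pi_pos.le⟩ x ⟨hx.1.le, hx.2.le⟩ hneg h) id
    have : (0:ℝ) < ∫ x in (0:ℝ)..π, (-q x) := by
      apply intervalIntegral.intervalIntegral_pos_of_pos_on
        ((hq.neg).intervalIntegrable 0 π) _ pi_pos
      intro x hx; simp only [Pi.neg_apply]; linarith [hall x hx]
    rw [intervalIntegral.integral_neg, hint] at this
    simp at this
  · have hall : ∀ x ∈ Set.Ioo (0:ℝ) π, 0 < q x := by
      intro x hx
      rcases lt_or_gt_of_ne (hc x ⟨hx.1.le, hx.2.le⟩) with h | h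
      · exact absurd (hIVT x ⟨hx.1.le, hx.2.le⟩ 0 ⟨le_rfl, pi_pos.le⟩ h hpos) id
      · exact h
    have : (0:ℝ) < ∫ x in (0:ℝ)..π, q x :=
      intervalIntegral.intervalIntegral_pos_of_pos_on (hq.intervalIntegrable 0 π) hall pi_pos
    rw [hint] at this
    simp at this

lemma periodic_half (q : ℝ → ℝ) (hq : Continuous q) (hqper : Function.Periodic q π) (c : ℝ) :
    ∫ x in (0:ℝ)..(2*π), q x = 2 * ∫ x in c..(c+π), q x := by
  have h1 : ∫ x in (0:ℝ)..(2*π), q x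
      = (∫ x in (0:ℝ)..π, q x) + ∫ x in π..(2*π), q x :=
    (intervalIntegral.integral_add_adjacent_intervals (hq.intervalIntegrable 0 π)
      (hq.intervalIntegrable π (2*π))).symm
  have h2 : ∫ x in (0:ℝ)..π, q x = ∫ x in c..(c+π), q x := by
    have := hqper.intervalIntegral_add_eq 0 c
    simpa using this
  have h3 : ∫ x in π..(2*π), q x = ∫ x in c..(c+π), q x := by
    have := hqper.intervalIntegral_add_eq π c
    have h2π : π + π = 2*π := by ring
    rwa [h2π] at this
  rw [h1, h2, h3]; ring

lemma shift_sq_integral (u : ℝ → ℝ) (hu : Continuous u) (huper : Function.Periodic u (2*π)) :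
    ∫ x in (0:ℝ)..(2*π), (u (x + π))^2 = ∫ x in (0:ℝ)..(2*π), (u x)^2 := by
  rw [intervalIntegral.integral_comp_add_right (fun x => (u x)^2)]
  have hsq : Function.Periodic (fun x => (u x)^2) (2*π) := fun x => by simp [huper x]
  have := hsq.intervalIntegral_add_eq π 0
  simpa [two_mul, add_comm, add_left_comm, add_assoc] using this

lemma wirtinger (f f' : ℝ → ℝ) (hf : ∀ x, HasDerivAt f (f' x) x) (hf' : Continuous f')
    (hper : Function.Periodic f (2*π)) (hmean : ∫ x in (0:ℝ)..(2*π), f x = 0) :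
    ∫ x in (0:ℝ)..(2*π), (f x)^2 ≤ ∫ x in (0:ℝ)..(2*π), (f' x)^2 := by
  have hfc : Continuous f := continuous_iff_continuousAt.mpr fun x => (hf x).continuousAt
  have hf'per : Function.Periodic f' (2*π) := by
    intro x
    have h1 : HasDerivAt (fun y => f (y + 2*π)) (f' (x + 2*π)) x := by
      simpa [Function.comp_def] using (hf (x + 2*π)).comp x ((hasDerivAt_id x).add_const (2*π))
    have h2 : (fun y => f (y + 2*π)) = f := funext hper
    rw [h2] at h1
    exact h1.unique (hf x)
  -- shifted derivative
  have hshift : ∀ x : ℝ, HasDerivAt (fun y => f (y + π)) (f' (x + π)) x := fun x => by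
    simpa [Function.comp_def] using (hf (x + π)).comp x ((hasDerivAt_id x).add_const π)
  set h : ℝ → ℝ := fun x => f x + f (x + π) with hh
  set k : ℝ → ℝ := fun x => f x - f (x + π) with hk
  set h' : ℝ → ℝ := fun x => f' x + f' (x + π) with hh'
  set k' : ℝ → ℝ := fun x => f' x - f' (x + π) with hk'
  have hdh : ∀ x, HasDerivAt h (h' x) x := fun x => (hf x).add (hshift x)
  have hdk : ∀ x, HasDerivAt k (k' x) x := fun x => (hf x).sub (hshift x)
  have hfshiftc : Continuous (fun x => f (x + π)) := hfc.comp (continuous_id.add continuous_const)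
  have hf'shiftc : Continuous (fun x => f' (x + π)) :=
    hf'.comp (continuous_id.add continuous_const)
  have hhc : Continuous h := hfc.add hfshiftc
  have hkc : Continuous k := hfc.sub hfshiftc
  have hh'c : Continuous h' := hf'.add hf'shiftc
  have hk'c : Continuous k' := hf'.sub hf'shiftc
  have hhper : Function.Periodic h π := by
    intro x
    have e1 : x + π + π = x + 2*π := by ring
    simp only [hh]
    rw [e1, hper x, add_comm (f (x + π)) (f x)]
  have hkanti : ∀ x, k (x + π) = - k x := by
    intro x
    have e1 : x + π + π = x + 2*π := by ring
    simp only [hk]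
    rw [e1, hper x]; ring
  have hh'per : Function.Periodic h' π := by
    intro x
    have e1 : x + π + π = x + 2*π := by ring
    simp only [hh']
    rw [e1, hf'per x, add_comm (f' (x + π)) (f' x)]
  have hk'anti : ∀ x, k' (x + π) = - k' x := by
    intro x
    have e1 : x + π + π = x + 2*π := by ring
    simp only [hk']
    rw [e1, hf'per x]; ring
  -- sum of squares identities
  have hsumf : (∫ x in (0:ℝ)..(2*π), (h x)^2) + (∫ x in (0:ℝ)..(2*π), (k x)^2)
      = 4 * ∫ x in (0:ℝ)..(2*π), (f x)^2 := by
    have e1 : (∫ x in (0:ℝ)..(2*π), (h x)^2) + (∫ x in (0:ℝ)..(2*π), (k x)^2)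
        = ∫ x in (0:ℝ)..(2*π), ((h x)^2 + (k x)^2) :=
      (intervalIntegral.integral_add ((hhc.pow 2).intervalIntegrable _ _)
        ((hkc.pow 2).intervalIntegrable _ _)).symm
    have e2 : ∀ x, (h x)^2 + (k x)^2 = 2 * (f x)^2 + 2 * (f (x + π))^2 := by
      intro x; simp only [hh, hk]; ring
    rw [e1, intervalIntegral.integral_congr (fun x _ => e2 x),
      intervalIntegral.integral_add (((continuous_const.fun_mul (hfc.fun_pow 2))).intervalIntegrable _ _)
        ((continuous_const.fun_mul (hfshiftc.fun_pow 2)).intervalIntegrable _ _),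
      intervalIntegral.integral_const_mul, intervalIntegral.integral_const_mul,
      shift_sq_integral f hfc hper]
    ring
  have hsumf' : (∫ x in (0:ℝ)..(2*π), (h' x)^2) + (∫ x in (0:ℝ)..(2*π), (k' x)^2)
      = 4 * ∫ x in (0:ℝ)..(2*π), (f' x)^2 := by
    have e1 : (∫ x in (0:ℝ)..(2*π), (h' x)^2) + (∫ x in (0:ℝ)..(2*π), (k' x)^2)
        = ∫ x in (0:ℝ)..(2*π), ((h' x)^2 + (k' x)^2) :=
      (intervalIntegral.integral_add ((hh'c.pow 2).intervalIntegrable _ _)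
        ((hk'c.pow 2).intervalIntegrable _ _)).symm
    have e2 : ∀ x, (h' x)^2 + (k' x)^2 = 2 * (f' x)^2 + 2 * (f' (x + π))^2 := by
      intro x; simp only [hh', hk']; ring
    rw [e1, intervalIntegral.integral_congr (fun x _ => e2 x),
      intervalIntegral.integral_add (((continuous_const.fun_mul (hf'.fun_pow 2))).intervalIntegrable _ _)
        ((continuous_const.fun_mul (hf'shiftc.fun_pow 2)).intervalIntegrable _ _),
      intervalIntegral.integral_const_mul, intervalIntegral.integral_const_mul,
      shift_sq_integral f' hf' hf'per]
    ring
  -- zero of h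
  have hmeanh : ∫ x in (0:ℝ)..π, h x = 0 := by
    have e1 : ∫ x in (0:ℝ)..π, h x
        = (∫ x in (0:ℝ)..π, f x) + ∫ x in (0:ℝ)..π, f (x + π) :=
      intervalIntegral.integral_add (hfc.intervalIntegrable _ _)
        (hfshiftc.intervalIntegrable _ _)
    have e2 : ∫ x in (0:ℝ)..π, f (x + π) = ∫ x in π..(2*π), f x := by
      rw [intervalIntegral.integral_comp_add_right f]
      norm_num [two_mul]
    have e3 : (∫ x in (0:ℝ)..π, f x) + ∫ x in π..(2*π), f x = ∫ x in (0:ℝ)..(2*π), f x :=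
      intervalIntegral.integral_add_adjacent_intervals (hfc.intervalIntegrable _ _)
        (hfc.intervalIntegrable _ _)
    rw [e1, e2, e3, hmean]
  obtain ⟨c, hc, hch⟩ := exists_zero_of_integral h hhc hmeanh
  -- zero of k
  have hk0 : ∃ c ∈ Set.Icc (0:ℝ) π, k c = 0 := by
    have e1 : k π = - k 0 := by
      have := hkanti 0
      simpa using this
    rcases eq_or_ne (k 0) 0 with h0 | h0
    · exact ⟨0, ⟨le_rfl, pi_pos.le⟩, h0⟩
    · have h0m : (0:ℝ) ∈ Set.uIcc (k 0) (k π) := by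
        rw [e1, Set.mem_uIcc]
        rcases lt_or_gt_of_ne h0 with hlt | hgt
        · left; constructor <;> linarith
        · right; constructor <;> linarith
      obtain ⟨c, hc', hqc⟩ := intermediate_value_uIcc (f := k) hkc.continuousOn h0m
      rw [Set.uIcc_of_le pi_pos.le] at hc'
      exact ⟨c, hc', hqc⟩
  obtain ⟨d, hd, hdk0⟩ := hk0
  -- apply Poincaré
  have hph : ∫ x in c..(c+π), (h x)^2 ≤ ∫ x in c..(c+π), (h' x)^2 :=
    poincare h h' hdh hh'c c hch (by rw [hhper c]; exact hch)
  have hpk : ∫ x in d..(d+π), (k x)^2 ≤ ∫ x in d..(d+π), (k' x)^2 :=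
    poincare k k' hdk hk'c d hdk0 (by rw [hkanti d, hdk0]; ring)
  -- half-period identities
  have hsqh : Function.Periodic (fun x => (h x)^2) π := fun x => by simp [hhper x]
  have hsqh' : Function.Periodic (fun x => (h' x)^2) π := fun x => by simp [hh'per x]
  have hsqk : Function.Periodic (fun x => (k x)^2) π := fun x => by
    simp only []; rw [hkanti x]; ring
  have hsqk' : Function.Periodic (fun x => (k' x)^2) π := fun x => by
    simp only []; rw [hk'anti x]; ring
  have e1 := periodic_half _ (hhc.fun_pow 2) hsqh c
  have e2 := periodic_half _ (hh'c.fun_pow 2) hsqh' c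
  have e3 := periodic_half _ (hkc.fun_pow 2) hsqk d
  have e4 := periodic_half _ (hk'c.fun_pow 2) hsqk' d
  linarith

lemma periodic_of_hasDerivAt (f f' : ℝ → ℝ) (hf : ∀ x, HasDerivAt f (f' x) x) {T : ℝ}
    (hper : Function.Periodic f T) : Function.Periodic f' T := by
  intro x
  have h1 : HasDerivAt (fun y => f (y + T)) (f' (x + T)) x := by
    simpa [Function.comp_def] using (hf (x + T)).comp x ((hasDerivAt_id x).add_const T)
  have h2 : (fun y => f (y + T)) = f := funext hper
  rw [h2] at h1
  exact h1.unique (hf x)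


end CircleIneqAux

open MeasureTheory Set Filter Topology in
/-- Circle inequality with quartic remainder: for a positive
`2π`-periodic `C³` function `P` one has
`∫ |P''|² P^{1-ν} ≥ ∫ |P'|² P^{1-ν} + ((ν-1)(ν+3)/12) ∫ (|P'|⁴/P²) P^{1-ν}`. -/
theorem circle_inequality_quartic_remainder
    (ν : ℝ) (hν : 2 < ν)
    (P : ℝ → ℝ) (hP : ContDiff ℝ 3 P)
    (hpos : ∀ θ : ℝ, 0 < P θ)
    (hper : ∀ θ : ℝ, P (θ + 2*π) = P θ) :
    (∫ θ in (0:ℝ)..(2*π), |deriv P θ|^2 * P θ ^ (1 - ν))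
      + ((ν-1)*(ν+3)/12) *
        ∫ θ in (0:ℝ)..(2*π), (|deriv P θ|^4 / P θ^2) * P θ ^ (1 - ν)
    ≤ ∫ θ in (0:ℝ)..(2*π), |deriv (deriv P) θ|^2 * P θ ^ (1 - ν) := by
  -- regularity bookkeeping
  have h3 : ContDiff ℝ ((2:ℕ) + 1) P := by exact_mod_cast hP
  have hd1 : ContDiff ℝ 2 (deriv P) := (contDiff_succ_iff_deriv.mp h3).2.2
  have h2' : ContDiff ℝ ((1:ℕ) + 1) (deriv P) := by exact_mod_cast hd1
  have hd2 : ContDiff ℝ 1 (deriv (deriv P)) := (contDiff_succ_iff_deriv.mp h2').2.2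
  have hPd : Differentiable ℝ P := hP.differentiable (by norm_num)
  have hp'd : Differentiable ℝ (deriv P) := hd1.differentiable (by norm_num)
  have hPc : Continuous P := hP.continuous
  have hp'c : Continuous (deriv P) := hd1.continuous
  have hp''c : Continuous (deriv (deriv P)) := hd2.continuous
  have hp1 : ∀ x, HasDerivAt P (deriv P x) x := fun x => (hPd x).hasDerivAt
  have hp2 : ∀ x, HasDerivAt (deriv P) (deriv (deriv P) x) x := fun x => (hp'd x).hasDerivAt
  have hPper : Function.Periodic P (2*π) := hper
  have hp'per : Function.Periodic (deriv P) (2*π) := periodic_of_hasDerivAt P (deriv P) hp1 hPper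
  set a : ℝ := (3 - ν)/2 with ha
  have hPne : ∀ θ, P θ ≠ 0 := fun θ => (hpos θ).ne'
  -- the function f and its derivative
  set f : ℝ → ℝ := fun θ => P θ ^ (a-1) * deriv P θ with hf
  set f' : ℝ → ℝ := fun θ =>
      (a-1) * P θ ^ (a-2) * (deriv P θ)^2 + P θ ^ (a-1) * deriv (deriv P) θ with hf'
  have hfd : ∀ θ, HasDerivAt f (f' θ) θ := by
    intro θ
    have h1 : HasDerivAt (fun t => P t ^ (a-1)) (deriv P θ * (a-1) * P θ ^ (a-1-1)) θ :=
      (hp1 θ).rpow_const (Or.inl (hPne θ))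
    have := h1.mul (hp2 θ)
    refine HasDerivAt.congr_deriv this ?_
    symm
    simp only [hf']
    have : a - 1 - 1 = a - 2 := by ring
    rw [this]; ring
  have hf'c : Continuous f' := by
    apply Continuous.add
    · exact (continuous_const.mul (hPc.rpow_const (fun x => Or.inl (hPne x)))).mul (hp'c.pow 2)
    · exact (hPc.rpow_const (fun x => Or.inl (hPne x))).mul hp''c
  have hfper : Function.Periodic f (2*π) := by
    intro x
    simp only [hf]
    rw [hper x, hp'per x]
  -- mean zero of f
  have hfcont : Continuous f := (hPc.rpow_const (fun x => Or.inl (hPne x))).mul hp'c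
  have hmean : ∫ x in (0:ℝ)..(2*π), f x = 0 := by
    rcases eq_or_ne a 0 with ha0 | ha0
    · have hF : ∀ x, HasDerivAt (fun t => Real.log (P t)) (f x) x := by
        intro x
        have := (hp1 x).log (hPne x)
        convert this using 1
        simp only [hf, ha0]
        rw [show (0:ℝ) - 1 = -1 by ring, Real.rpow_neg_one]
        field_simp
      rw [intervalIntegral.integral_eq_sub_of_hasDerivAt (fun x _ => hF x)
        (hfcont.intervalIntegrable 0 (2*π))]
      rw [show (2*π : ℝ) = 0 + 2*π by ring, hper 0]
      ring
    · have hF : ∀ x, HasDerivAt (fun t => P t ^ a / a) (f x) x := by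
        intro x
        have := ((hp1 x).rpow_const (p := a) (Or.inl (hPne x))).div_const a
        refine HasDerivAt.congr_deriv this ?_
        symm
        simp only [hf]
        field_simp
      rw [intervalIntegral.integral_eq_sub_of_hasDerivAt (fun x _ => hF x)
        (hfcont.intervalIntegrable 0 (2*π))]
      rw [show (2*π : ℝ) = 0 + 2*π by ring, hper 0]
      ring
  -- Wirtinger inequality for f
  have hW := wirtinger f f' hfd hf'c hfper hmean
  -- notation for the three basic integrals
  set Q : ℝ := ∫ θ in (0:ℝ)..(2*π), (deriv P θ)^4 * P θ ^ (2*a-4) with hQ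
  set S : ℝ := ∫ θ in (0:ℝ)..(2*π), (deriv P θ)^2 * deriv (deriv P) θ * P θ ^ (2*a-3) with hS
  set J1 : ℝ := ∫ θ in (0:ℝ)..(2*π), (deriv P θ)^2 * P θ ^ (2*a-2) with hJ1
  set J2 : ℝ := ∫ θ in (0:ℝ)..(2*π), (deriv (deriv P) θ)^2 * P θ ^ (2*a-2) with hJ2
  have hrpow : ∀ c : ℝ, Continuous (fun θ => P θ ^ c) := fun c =>
    hPc.rpow_const (fun x => Or.inl (hPne x))
  have hQcont : Continuous (fun θ => (deriv P θ)^4 * P θ ^ (2*a-4)) :=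
    (hp'c.pow 4).mul (hrpow _)
  have hScont : Continuous (fun θ => (deriv P θ)^2 * deriv (deriv P) θ * P θ ^ (2*a-3)) :=
    (((hp'c.pow 2).mul hp''c)).mul (hrpow _)
  have hJ2cont : Continuous (fun θ => (deriv (deriv P) θ)^2 * P θ ^ (2*a-2)) :=
    (hp''c.pow 2).mul (hrpow _)
  -- rewrite ∫ f² = J1
  have hfsq : ∫ x in (0:ℝ)..(2*π), (f x)^2 = J1 := by
    apply intervalIntegral.integral_congr
    intro θ _
    simp only [hf]
    rw [mul_pow, sq (P θ ^ (a-1)), ← Real.rpow_add (hpos θ),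
      show (a-1) + (a-1) = 2*a-2 by ring]
    ring
  -- decompose ∫ f'²
  have hptw : ∀ θ, (f' θ)^2
      = (a-1)^2 * ((deriv P θ)^4 * P θ ^ (2*a-4))
        + 2*(a-1) * ((deriv P θ)^2 * deriv (deriv P) θ * P θ ^ (2*a-3))
        + (deriv (deriv P) θ)^2 * P θ ^ (2*a-2) := by
    intro θ
    have e1 : P θ ^ (a-2) * P θ ^ (a-2) = P θ ^ (2*a-4) := by
      rw [← Real.rpow_add (hpos θ)]; congr 1; ring
    have e2 : P θ ^ (a-2) * P θ ^ (a-1) = P θ ^ (2*a-3) := by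
      rw [← Real.rpow_add (hpos θ)]; congr 1; ring
    have e3 : P θ ^ (a-1) * P θ ^ (a-1) = P θ ^ (2*a-2) := by
      rw [← Real.rpow_add (hpos θ)]; congr 1; ring
    simp only [hf']
    linear_combination ((a-1)^2*(deriv P θ)^4) * e1
      + (2*(a-1)*(deriv P θ)^2*(deriv (deriv P) θ)) * e2
      + ((deriv (deriv P) θ)^2) * e3
  have hfsq' : ∫ x in (0:ℝ)..(2*π), (f' x)^2 = (a-1)^2 * Q + 2*(a-1) * S + J2 := by
    rw [intervalIntegral.integral_congr (fun θ _ => hptw θ),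
      intervalIntegral.integral_add
        (((continuous_const.fun_mul hQcont).fun_add (continuous_const.fun_mul hScont)).intervalIntegrable _ _)
        (hJ2cont.intervalIntegrable _ _),
      intervalIntegral.integral_add
        ((continuous_const.fun_mul hQcont).intervalIntegrable _ _)
        ((continuous_const.fun_mul hScont).intervalIntegrable _ _),
      intervalIntegral.integral_const_mul, intervalIntegral.integral_const_mul]
  -- integration by parts identity
  have hG : ∀ θ, HasDerivAt (fun t => (deriv P t)^3 * P t ^ (2*a-3))
      (3*((deriv P θ)^2 * deriv (deriv P) θ * P θ ^ (2*a-3))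
        + (2*a-3)*((deriv P θ)^4 * P θ ^ (2*a-4))) θ := by
    intro θ
    have h1 : HasDerivAt (fun t => (deriv P t)^3)
        ((3:ℕ) * (deriv P θ)^((3:ℕ)-1) * deriv (deriv P) θ) θ := (hp2 θ).pow 3
    have h2 : HasDerivAt (fun t => P t ^ (2*a-3))
        (deriv P θ * (2*a-3) * P θ ^ (2*a-3-1)) θ :=
      (hp1 θ).rpow_const (p := 2*a-3) (Or.inl (hPne θ))
    have := h1.mul h2
    refine HasDerivAt.congr_deriv this ?_
    symm
    rw [show 2*a-3-1 = 2*a-4 by ring]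
    push_cast
    ring
  have hGcont : Continuous (fun θ =>
      3*((deriv P θ)^2 * deriv (deriv P) θ * P θ ^ (2*a-3))
        + (2*a-3)*((deriv P θ)^4 * P θ ^ (2*a-4))) :=
    (continuous_const.mul hScont).add (continuous_const.mul hQcont)
  have hzero : 3 * S + (2*a-3) * Q = 0 := by
    have hint := intervalIntegral.integral_eq_sub_of_hasDerivAt
      (f := fun t => (deriv P t)^3 * P t ^ (2*a-3)) (a := 0) (b := 2*π)
      (fun θ _ => hG θ) (hGcont.intervalIntegrable _ _)
    rw [intervalIntegral.integral_add
        ((continuous_const.fun_mul hScont).intervalIntegrable _ _)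
        ((continuous_const.fun_mul hQcont).intervalIntegrable _ _),
      intervalIntegral.integral_const_mul, intervalIntegral.integral_const_mul] at hint
    rw [← hS, ← hQ] at hint
    rw [hint]
    show (deriv P (2*π))^3 * P (2*π) ^ (2*a-3) - (deriv P 0)^3 * P 0 ^ (2*a-3) = 0
    rw [show (2*π : ℝ) = 0 + 2*π by ring, hper 0, hp'per 0]
    ring
  -- rewrite the goal's integrals
  have hgoal1 : ∫ θ in (0:ℝ)..(2*π), |deriv P θ|^2 * P θ ^ (1-ν) = J1 := by
    apply intervalIntegral.integral_congr
    intro θ _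
    beta_reduce
    rw [sq_abs, show (1:ℝ)-ν = 2*a-2 by simp only [ha]; ring]
  have hgoal3 : ∫ θ in (0:ℝ)..(2*π), |deriv (deriv P) θ|^2 * P θ ^ (1-ν) = J2 := by
    apply intervalIntegral.integral_congr
    intro θ _
    beta_reduce
    rw [sq_abs, show (1:ℝ)-ν = 2*a-2 by simp only [ha]; ring]
  have hgoal2 : ∫ θ in (0:ℝ)..(2*π), (|deriv P θ|^4 / P θ^2) * P θ ^ (1-ν) = Q := by
    apply intervalIntegral.integral_congr
    intro θ _
    beta_reduce
    have habs : |deriv P θ|^4 = (deriv P θ)^4 := by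
      rw [show (4:ℕ) = 2*2 from rfl, pow_mul, sq_abs, ← pow_mul]
    have hdiv : P θ ^ (2*a-2) / (P θ)^2 = P θ ^ (2*a-4) := by
      rw [← Real.rpow_natCast (P θ) 2, ← Real.rpow_sub (hpos θ)]
      congr 1
      push_cast; ring
    rw [habs, show (1:ℝ)-ν = 2*a-2 by simp only [ha]; ring,
      div_mul_eq_mul_div, mul_div_assoc, hdiv]
  rw [hgoal1, hgoal2, hgoal3]
  rw [hfsq, hfsq'] at hW
  have key : (a-1)^2 * Q + 2*(a-1) * S = -((ν-1)*(ν+3)/12) * Q := by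
    have hSval : S = -((2*a-3)/3) * Q := by linear_combination (1/3) * hzero
    rw [hSval]
    simp only [ha]
    ring
  linarith
end
end

section
/- (Power-type supersolution) Let d ≥ 2 and let β, γ, p satisfy γ < d, γ − 2 < β < (d-2)γ/d, and p ∈ (1, p⋆] with p⋆ = (d-γ)/(d-β-2). Let ε ∈ [0,1) and C > 0, and define h(x) := C |x|^{(γ-2-β)/(p-1)}. If C^{p-1} ≥ (2-γ+β)(d-γ-p(d-2-β)) / ((1-ε)(p-1)²), then h satisfies the pointwise differential inequality −div(|x|^{-β} ∇h)(x) + (1-ε) |x|^{-γ} h(x)^p ≥ 0 for every x ∈ ℝ^d \ {0}. -/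
open MeasureTheory Real Filter Set
open scoped RealInnerProductSpace

noncomputable section

/-- Weighted norm `‖w‖_{q,γ} = (∫ |w|^q |x|^{-γ} dx)^{1/q}`. -/
def wnorm (d : ℕ) (q γ : ℝ) (w : Esp d → ℝ) : ℝ :=
  (∫ x : Esp d, |w x| ^ q * ‖x‖ ^ (-γ)) ^ (1/q)

/-- Weighted gradient norm `‖∇w‖_{2,β} = (∫ |∇w|² |x|^{-β} dx)^{1/2}`. -/
def gnorm (d : ℕ) (β : ℝ) (w : Esp d → ℝ) : ℝ :=
  (∫ x : Esp d, ‖gradient w x‖ ^ (2:ℝ) * ‖x‖ ^ (-β)) ^ ((1:ℝ)/2)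

/-- The interpolation exponent θ. -/
def thetaExp (d : ℕ) (β γ p : ℝ) : ℝ :=
  ((d:ℝ) - γ) * (p - 1) / (p * ((d:ℝ) + β + 2 - 2*γ - p*((d:ℝ) - β - 2)))

/-- The Aubin–Talenti type function `w⋆(x) = (1+|x|^{2+β-γ})^{-1/(p-1)}`. -/
def wstar (d : ℕ) (β γ p : ℝ) : Esp d → ℝ :=
  fun x => (1 + ‖x‖ ^ (2 + β - γ)) ^ (-(1/(p-1)))

/-- The Felli–Schneider curve `β_FS(γ)`. -/
def betaFS (d : ℕ) (γ : ℝ) : ℝ :=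
  (d:ℝ) - 2 - Real.sqrt ((γ - (d:ℝ))^2 - 4*((d:ℝ)-1))

/-- The value of the CKN quotient at `w⋆`. -/
def Cstar (d : ℕ) (β γ p : ℝ) : ℝ :=
  wnorm d (2*p) γ (wstar d β γ p) /
    (gnorm d β (wstar d β γ p) ^ thetaExp d β γ p *
      wnorm d (p+1) γ (wstar d β γ p) ^ (1 - thetaExp d β γ p))

/-- Divergence of a vector field on `ℝ^d`. -/
def diverg (d : ℕ) (F : Esp d → Esp d) (x : Esp d) : ℝ :=
  ∑ i, fderiv ℝ F x (EuclideanSpace.single i 1) i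

/-- helper lemmas --/

lemma myFDerivNormRpow {d : ℕ} (α : ℝ) {x : Esp d} (hx : x ≠ 0) :
    HasFDerivAt (fun y : Esp d => ‖y‖ ^ α) ((α * ‖x‖ ^ (α - 2)) • (innerSL ℝ x)) x := by
  have hnx : (0:ℝ) < ‖x‖ := norm_pos_iff.mpr hx
  have hq : HasFDerivAt (fun y : Esp d => (⟪y, y⟫ : ℝ))
      ((fderivInnerCLM ℝ (x, x)).comp ((ContinuousLinearMap.id ℝ (Esp d)).prod
        (ContinuousLinearMap.id ℝ (Esp d)))) x :=
    (hasFDerivAt_id x).inner ℝ (hasFDerivAt_id x)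
  have hqx : (⟪x, x⟫ : ℝ) ≠ 0 := by
    rw [real_inner_self_eq_norm_sq]; positivity
  have hr : HasDerivAt (fun t : ℝ => t ^ (α/2)) ((α/2) * (⟪x,x⟫:ℝ) ^ (α/2 - 1)) (⟪x,x⟫:ℝ) :=
    Real.hasDerivAt_rpow_const (Or.inl hqx)
  have h := hr.comp_hasFDerivAt (f := fun y : Esp d => (⟪y,y⟫:ℝ)) x hq
  have hfun : (fun y : Esp d => (⟪y,y⟫:ℝ) ^ (α/2)) = fun y : Esp d => ‖y‖ ^ α := by
    funext y
    rw [real_inner_self_eq_norm_sq, ← Real.rpow_natCast ‖y‖ 2, ← Real.rpow_mul (norm_nonneg y)]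
    · congr 1; push_cast; ring
  simp only [Function.comp_def] at h
  rw [hfun] at h
  have h2 : (⟪x,x⟫:ℝ) ^ (α/2 - 1) = ‖x‖ ^ (α - 2) := by
    rw [real_inner_self_eq_norm_sq, ← Real.rpow_natCast ‖x‖ 2, ← Real.rpow_mul (norm_nonneg x)]
    congr 1; push_cast; ring
  have hCLM : (α/2 * (⟪x,x⟫:ℝ) ^ (α/2 - 1)) •
      ((fderivInnerCLM ℝ (x, x)).comp ((ContinuousLinearMap.id ℝ (Esp d)).prod
        (ContinuousLinearMap.id ℝ (Esp d))))
      = (α * ‖x‖ ^ (α - 2)) • (innerSL ℝ x) := by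
    ext v
    simp only [ContinuousLinearMap.smul_apply, ContinuousLinearMap.comp_apply,
      ContinuousLinearMap.prod_apply, ContinuousLinearMap.id_apply, fderivInnerCLM_apply,
      innerSL_apply_apply, smul_eq_mul, h2]
    rw [real_inner_comm v x]
    ring
  exact hCLM ▸ h

lemma myGradPow {d : ℕ} (C α : ℝ) {x : Esp d} (hx : x ≠ 0) :
    HasGradientAt (fun z : Esp d => C * ‖z‖ ^ α) ((C * α * ‖x‖ ^ (α - 2)) • x) x := by
  rw [hasGradientAt_iff_hasFDerivAt]
  have h := (myFDerivNormRpow α hx).const_mul C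
  have hCLM : (InnerProductSpace.toDual ℝ (Esp d)) ((C * α * ‖x‖ ^ (α - 2)) • x)
      = C • ((α * ‖x‖ ^ (α - 2)) • innerSL ℝ x) := by
    ext v
    simp only [InnerProductSpace.toDual_apply_apply, ContinuousLinearMap.smul_apply,
      innerSL_apply_apply, smul_eq_mul, real_inner_smul_left]
    ring
  rw [hCLM]
  exact h

lemma myGradientEq {d : ℕ} (C α : ℝ) {y : Esp d} (hy : y ≠ 0) :
    gradient (fun z : Esp d => C * ‖z‖ ^ α) y = (C * α * ‖y‖ ^ (α - 2)) • y :=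
  (myGradPow C α hy).gradient

lemma myDivergEq {d : ℕ} (k s : ℝ) {x : Esp d} (hx : x ≠ 0) :
    (∑ i, fderiv ℝ (fun y : Esp d => (k * ‖y‖ ^ s) • y) x (EuclideanSpace.single i 1) i)
      = k * ((d:ℝ) + s) * ‖x‖ ^ s := by
  have hnx : (0:ℝ) < ‖x‖ := norm_pos_iff.mpr hx
  have hg : HasFDerivAt (fun y : Esp d => k * ‖y‖ ^ s)
      (k • ((s * ‖x‖ ^ (s - 2)) • innerSL ℝ x)) x := (myFDerivNormRpow s hx).const_mul k
  have hG := hg.smul (hasFDerivAt_id x)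
  simp only [id_eq] at hG
  rw [HasFDerivAt.fderiv (f := fun y : Esp d => (k * ‖y‖ ^ s) • y) hG]
  have hsum : ∑ i, x i * x i = ‖x‖ ^ (2:ℕ) := by
    rw [EuclideanSpace.norm_sq_eq]; simp only [Real.norm_eq_abs, sq_abs, sq, abs_mul_abs_self]
  simp only [ContinuousLinearMap.add_apply, ContinuousLinearMap.smul_apply,
    ContinuousLinearMap.id_apply, ContinuousLinearMap.smulRight_apply, innerSL_apply_apply,
    smul_eq_mul, PiLp.smul_apply, PiLp.add_apply, EuclideanSpace.inner_single_right,
    map_one, one_mul, Finset.sum_add_distrib]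
  simp only [EuclideanSpace.single_apply, if_pos rfl, starRingEnd_apply, star_trivial,
    mul_one, Finset.sum_const, Finset.card_univ, Fintype.card_fin, nsmul_eq_mul, if_true]
  have h1 : ∑ i, k * (s * ‖x‖ ^ (s - 2) * x i) * x i
      = k * s * ‖x‖ ^ (s - 2) * ∑ i, x i * x i := by
    rw [Finset.mul_sum]; congr 1; funext i; ring
  rw [h1, hsum]
  have h2 : ‖x‖ ^ (s - 2) * ‖x‖ ^ (2:ℕ) = ‖x‖ ^ s := by
    rw [← Real.rpow_natCast ‖x‖ 2, ← Real.rpow_add hnx]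
    norm_num
  linear_combination k * s * h2

/-- Power-type supersolution: if
`C^{p-1} ≥ (2-γ+β)(d-γ-p(d-2-β))/((1-ε)(p-1)²)` then
`h(x) = C|x|^{(γ-2-β)/(p-1)}` satisfies
`−div(|x|^{-β}∇h) + (1-ε)|x|^{-γ} h^p ≥ 0` on `ℝ^d \ {0}`. -/
theorem power_supersolution
    (d : ℕ) (hd : 2 ≤ d) (β γ p : ℝ)
    (hγd : γ < (d:ℝ)) (hβl : γ - 2 < β) (hβu : β < ((d:ℝ) - 2) * γ / (d:ℝ))
    (hp1 : 1 < p) (hp2 : p ≤ ((d:ℝ) - γ) / ((d:ℝ) - β - 2))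
    (ε C : ℝ) (hε0 : 0 ≤ ε) (hε1 : ε < 1) (hC : 0 < C)
    (hCbig : (2 - γ + β) * ((d:ℝ) - γ - p*((d:ℝ) - 2 - β)) / ((1-ε)*(p-1)^2)
      ≤ C ^ (p-1)) :
    ∀ x : Esp d, x ≠ 0 →
      0 ≤ - diverg d
            (fun y => ‖y‖ ^ (-β) • gradient (fun z => C * ‖z‖ ^ ((γ-2-β)/(p-1))) y) x
          + (1-ε) * ‖x‖ ^ (-γ) * (C * ‖x‖ ^ ((γ-2-β)/(p-1))) ^ p := by
  
  intro x hx0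
  have hnx : (0:ℝ) < ‖x‖ := norm_pos_iff.mpr hx0
  have hq : p - 1 ≠ 0 := sub_ne_zero.mpr (ne_of_gt hp1)
  set α := (γ-2-β)/(p-1) with hαdef
  set s := α - β - 2 with hsdef
  have hof : α * (p-1) = γ - 2 - β := div_mul_cancel₀ _ hq
  -- the vector field agrees near x with a nice one
  have heq : (fun y : Esp d => ‖y‖ ^ (-β) • gradient (fun z : Esp d => C * ‖z‖ ^ α) y)
      =ᶠ[nhds x] (fun y : Esp d => ((C * α) * ‖y‖ ^ s) • y) := by
    filter_upwards [IsOpen.mem_nhds isOpen_ne hx0] with y hy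
    have hny : (0:ℝ) < ‖y‖ := norm_pos_iff.mpr hy
    rw [myGradientEq C α hy, smul_smul]
    congr 1
    have hpow : ‖y‖ ^ (-β) * ‖y‖ ^ (α - 2) = ‖y‖ ^ s := by
      rw [← Real.rpow_add hny]; congr 1; rw [hsdef]; ring
    linear_combination (C * α) * hpow
  have hdiv : diverg d
      (fun y : Esp d => ‖y‖ ^ (-β) • gradient (fun z : Esp d => C * ‖z‖ ^ α) y) x
      = (C*α) * ((d:ℝ) + s) * ‖x‖ ^ s := by
    unfold diverg
    rw [show (fderiv ℝ (fun y : Esp d => ‖y‖ ^ (-β) • gradient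
        (fun z : Esp d => C * ‖z‖ ^ α) y) x)
      = fderiv ℝ (fun y : Esp d => ((C * α) * ‖y‖ ^ s) • y) x from heq.fderiv_eq]
    exact myDivergEq (C*α) s hx0
  rw [hdiv]
  -- rewrite the zeroth order term
  have hmul : (C * ‖x‖ ^ α) ^ p = C ^ p * ‖x‖ ^ (α * p) := by
    rw [Real.mul_rpow hC.le (Real.rpow_pos_of_pos hnx α).le,
      ← Real.rpow_mul (norm_nonneg x)]
  have hexp : α * p - γ = s := by rw [hsdef]; nlinarith [hof]
  have hxs : ‖x‖ ^ (-γ) * ‖x‖ ^ (α*p) = ‖x‖ ^ s := by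
    rw [← Real.rpow_add hnx]; congr 1; linarith [hexp]
  have hCp : C ^ p = C ^ (p-1) * C := by
    rw [show p = (p-1)+1 by ring, Real.rpow_add hC, Real.rpow_one]
    ring_nf
  -- key scalar inequality
  have hε' : (0:ℝ) < 1 - ε := by linarith
  have hp2' : (0:ℝ) < (p-1)^2 := by positivity
  have h1 : α * ((d:ℝ) + s) * ((p-1)^2) = (2-γ+β) * ((d:ℝ) - γ - p*((d:ℝ)-2-β)) := by
    rw [hsdef, hαdef]; field_simp; ring
  have hKey : α * ((d:ℝ) + s) ≤ (1-ε) * C ^ (p-1) := by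
    have h2 := mul_le_mul_of_nonneg_left hCbig hε'.le
    have h3 : (1-ε) * ((2-γ+β) * ((d:ℝ) - γ - p*((d:ℝ)-2-β)) / ((1-ε)*(p-1)^2))
        = (2-γ+β) * ((d:ℝ) - γ - p*((d:ℝ)-2-β)) / ((p-1)^2) := by
      field_simp
    rw [h3] at h2
    have h4 : α * ((d:ℝ) + s) = (2-γ+β) * ((d:ℝ) - γ - p*((d:ℝ)-2-β)) / ((p-1)^2) :=
      (eq_div_iff hp2'.ne').mpr h1
    rw [h4]; exact h2
  rw [hmul, hCp]
  have hXpos : (0:ℝ) < ‖x‖ ^ s := Real.rpow_pos_of_pos hnx s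
  have hfin : (1-ε) * ‖x‖ ^ (-γ) * (C ^ (p-1) * C * ‖x‖ ^ (α*p))
      = (1-ε) * (C ^ (p-1) * C) * ‖x‖ ^ s := by
    linear_combination (1-ε) * (C ^ (p-1) * C) * hxs
  rw [hfin]
  nlinarith [mul_nonneg (mul_pos hC hXpos).le (sub_nonneg.mpr hKey)]
end
end
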